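/- arXiv:1303.6548 — 6 statements merged into one kernel-verified Lean document; each statement's English description precedes it below -/
import Mathlib

section
/- Let ψ, u, g be real numbers with ψ > 1 and u² + g < 0, and let A(ψ,u,g) be the 2×2 real matrix with entries A₁₁ = −u/ψ², A₁₂ = (1−ψ)/ψ, A₂₁ = (u²+g)/ψ³, A₂₂ = −u/ψ². Then with D = √((u²+g)(1−ψ)), the numbers λ₁ = (−u − D)/ψ² and λ₂ = (−u + D)/ψ² satisfy λ₁ < λ₂; in particular the matrix A has two distinct real eigenvalues, so the system is strictly hyperbolic. -/
/-- Under ψ > 1 and u² + g < 0, the two characteristic speeds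
λ₁ = (−u−D)/ψ² and λ₂ = (−u+D)/ψ², with D = √((u²+g)(1−ψ)), are distinct
(λ₁ < λ₂): the system is strictly hyperbolic. -/
theorem gel_strict_hyperbolicity (ψ u g : ℝ) (hψ : 1 < ψ) (hhyp : u ^ 2 + g < 0) :
    let D : ℝ := Real.sqrt ((u ^ 2 + g) * (1 - ψ))
    let lam1 : ℝ := (-u - D) / ψ ^ 2
    let lam2 : ℝ := (-u + D) / ψ ^ 2
    lam1 < lam2 := by
  intro D lam1 lam2
  have hD : 0 < D := Real.sqrt_pos.mpr (mul_pos_of_neg_of_neg hhyp (by linarith))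
  have hψ2 : (0:ℝ) < ψ ^ 2 := by positivity
  have : -u - D < -u + D := by linarith
  have : -u - D < -u + D := by linarith
  exact (div_lt_div_iff_of_pos_right hψ2).mpr this
end

section
/- Let ψ, u, g be real numbers with ψ > 1 and u² + g < 0, and let A(ψ,u,g) be the 2×2 real matrix with entries A₁₁ = −u/ψ², A₁₂ = (1−ψ)/ψ, A₂₁ = (u²+g)/ψ³, A₂₂ = −u/ψ². Set D = √((u²+g)(1−ψ)) and s = √((u²+g)/(1−ψ)). Then the row vector (−s/ψ, 1) is a left eigenvector of A with eigenvalue (−u + D)/ψ², i.e. (−s/ψ, 1)·A = ((−u+D)/ψ²)·(−s/ψ, 1), and the row vector (s/ψ, 1) is a left eigenvector of A with eigenvalue (−u − D)/ψ². -/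
/-- Left eigenvectors of the gradient matrix A(ψ,u,g): the row vector
(−s/ψ, 1) is a left eigenvector with eigenvalue (−u+D)/ψ² and (s/ψ, 1) is
a left eigenvector with eigenvalue (−u−D)/ψ², where D = √((u²+g)(1−ψ)) and
s = √((u²+g)/(1−ψ)). -/
theorem gel_left_eigenvectors (ψ u g : ℝ) (hψ : 1 < ψ) (hhyp : u ^ 2 + g < 0) :
    let A : Matrix (Fin 2) (Fin 2) ℝ :=
      !![-u / ψ ^ 2, (1 - ψ) / ψ; (u ^ 2 + g) / ψ ^ 3, -u / ψ ^ 2]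
    let D : ℝ := Real.sqrt ((u ^ 2 + g) * (1 - ψ))
    let s : ℝ := Real.sqrt ((u ^ 2 + g) / (1 - ψ))
    Matrix.vecMul ![-s / ψ, 1] A = ((-u + D) / ψ ^ 2) • ![-s / ψ, 1] ∧
      Matrix.vecMul ![s / ψ, 1] A = ((-u - D) / ψ ^ 2) • ![s / ψ, 1] := by
  intro A D s
  have hψ0 : ψ ≠ 0 := by positivity
  have h1ψ : 1 - ψ ≠ 0 := by linarith
  have hs2 : s * s = (u ^ 2 + g) / (1 - ψ) := by
    have : (0:ℝ) ≤ (u ^ 2 + g) / (1 - ψ) := by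
      exact div_nonneg_of_nonpos ( by linarith) (by linarith)
    simpa [s] using Real.mul_self_sqrt this
  have hD : D = s * (ψ - 1) := by
    have h1 : (0:ℝ) ≤ s := Real.sqrt_nonneg _
    have h2 : (0:ℝ) ≤ ψ - 1 := by linarith
    have : (s * (ψ - 1)) ^ 2 = (u ^ 2 + g) * (1 - ψ) := by
      have : (s * (ψ - 1)) ^ 2 = (s * s) * (ψ - 1) ^ 2 := by ring
      rw [this, hs2]; field_simp; ring
    rw [show D = Real.sqrt ((u ^ 2 + g) * (1 - ψ)) from rfl, ← this,
      Real.sqrt_sq (by positivity)]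
  have hug : u ^ 2 + g = s * s * (1 - ψ) := by rw [hs2]; field_simp
  constructor <;>
  · funext i
    fin_cases i <;>
      simp [A, Matrix.vecMul, dotProduct, Fin.sum_univ_two, hD] <;>
      · first
        | (rw [hug]; field_simp; ring)
        | (field_simp; ring)
end

section
/- Let n, q, v₁ be vectors in Euclidean ℝ³ with ‖n‖ = 1 and ⟨q, n⟩ = 0, let w, γ₂, φ₂ be real numbers with φ₂ ≠ 0, and define v₂ = v₁ + (w/φ₂)·n + q and v_f = v₁ + w·n + q. Let T₁, T₂, T be 3×3 real matrices satisfying the interface momentum balance (T₁ + T₂ − T)·n = γ₂·|w|·w·(1 − 1/φ₂)·n. Then ⟨T₁·n, v₁⟩ + ⟨T₂·n, v₂⟩ − ⟨T·n, v_f⟩ = γ₂·|w|·w·(1 − 1/φ₂)·⟨v₁, n⟩ + ( ⟨(1/φ₂)·T₂·n, n⟩ − ⟨T·n, n⟩ )·w − ⟨T₁·n, q⟩. -/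
open scoped RealInnerProductSpace Matrix

/-- Stress-power boundary identity (2.34) at the gel–solvent interface. -/
theorem gel_stress_power_boundary_identity
    (n q v₁ : EuclideanSpace ℝ (Fin 3)) (hn : ‖n‖ = 1) (hq : ⟪q, n⟫ = 0)
    (w γ₂ φ₂ : ℝ) (hφ : φ₂ ≠ 0)
    (T₁ T₂ T : Matrix (Fin 3) (Fin 3) ℝ)
    (hbal : Matrix.toEuclideanLin (T₁ + T₂ - T) n = (γ₂ * |w| * w * (1 - 1 / φ₂)) • n) :
    let v₂ := v₁ + (w / φ₂) • n + q
    let vf := v₁ + w • n + q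
    ⟪Matrix.toEuclideanLin T₁ n, v₁⟫ + ⟪Matrix.toEuclideanLin T₂ n, v₂⟫
        - ⟪Matrix.toEuclideanLin T n, vf⟫
      = γ₂ * |w| * w * (1 - 1 / φ₂) * ⟪v₁, n⟫
        + (⟪Matrix.toEuclideanLin ((1 / φ₂) • T₂) n, n⟫
            - ⟪Matrix.toEuclideanLin T n, n⟫) * w
        - ⟪Matrix.toEuclideanLin T₁ n, q⟫ := by
  intro v₂ vf
  set A := Matrix.toEuclideanLin T₁ n with hA
  set B := Matrix.toEuclideanLin T₂ n with hB
  set C := Matrix.toEuclideanLin T n with hC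
  set c := γ₂ * |w| * w * (1 - 1 / φ₂) with hc
  have hsum : A + B - C = c • n := by
    simpa [map_add, map_sub, LinearMap.add_apply, LinearMap.sub_apply] using hbal
  have hBeq : B = c • n - A + C := by
    have := hsum; abel_nf at this ⊢; linear_combination (norm := abel) this
  have hscal : Matrix.toEuclideanLin ((1 / φ₂) • T₂) n = (1 / φ₂) • B := by
    rw [hB, map_smul]; rfl
  have hnn : ⟪n, n⟫ = 1 := real_inner_self_eq_norm_sq n ▸ by rw [hn]; norm_num
  have hqn : ⟪n, q⟫ = 0 := by rw [real_inner_comm]; exact hq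
  rw [real_inner_comm n v₁]
  simp only [v₂, vf, hBeq, hscal, inner_add_right, inner_smul_right, inner_add_left,
    inner_sub_left, inner_smul_left, real_inner_smul_left, hnn, hqn, conj_trivial]
  field_simp
  ring
end

section
/- Let n, q, v₁ be vectors in Euclidean ℝ³ with ‖n‖ = 1 and ⟨q, n⟩ = 0, let γ₂, φ₂, η_⊥, η_∥ be real numbers with φ₂ ≠ 0, and let w ≤ 0 (swelling state). Define v₂ = v₁ + (w/φ₂)·n + q and v_f = v₁ + w·n + q. Let T₁, T₂, T be 3×3 real matrices satisfying: (i) the momentum balance (T₁ + T₂ − T)·n = γ₂·|w|·w·(1 − 1/φ₂)·n; (ii) the permeability condition η_⊥·w = (⟨T·n, n⟩ − (1/2)γ₂w²) − (⟨(1/φ₂)·T₂·n, n⟩ − (1/2)γ₂(w/φ₂)²); and (iii) the slip condition that the tangential part of T₁·n equals η_∥·q, i.e. T₁·n − ⟨T₁·n, n⟩·n = η_∥·q. Then ⟨T₁·n, v₁⟩ + ⟨T₂·n, v₂⟩ − ⟨T·n, v_f⟩ + (1/2)γ₂φ₂‖v₂‖²⟨v₁ − v₂, n⟩ − (1/2)γ₂‖v_f‖²⟨v₁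 − v_f, n⟩ = −η_⊥·w² − η_∥·‖q‖². -/
open scoped RealInnerProductSpace Matrix

private lemma gel_key (φ₂ : ℝ) (hφ : φ₂ ≠ 0)
    (γ₂ ηperp ηpar w av bv cv bn cn aq bq cq nv qv vv qq : ℝ)
    (h1 : av + bv - cv = γ₂ * (-w) * w * (1 - 1/φ₂) * nv)
    (h3 : aq + bq - cq = 0)
    (h4 : aq = ηpar * qq)
    (h5 : ηperp * w = (cn - 1/2*γ₂*w^2) - ((1/φ₂)*bn - 1/2*γ₂*(w/φ₂)^2)) :
    av + (bv + (w/φ₂)*bn + bq) - (cv + w*cn + cq)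
      + 1/2*γ₂*φ₂*(vv + (w/φ₂)^2 + qq + 2*(w/φ₂)*nv + 2*qv)*(-(w/φ₂))
      - 1/2*γ₂*(vv + w^2 + qq + 2*w*nv + 2*qv)*(-w)
      = -ηperp*w^2 - ηpar*qq := by
  linear_combination (norm := (field_simp; ring)) h1 + h3 - h4 + w * h5

/-- Pointwise form of the interfacial energy production in the dissipation law
(2.36)–(2.39): under the momentum balance, permeability and slip conditions the
boundary contribution equals −η⊥·w² − η∥·‖q‖². -/
theorem gel_interface_energy_dissipation
    (n q v₁ : EuclideanSpace ℝ (Fin 3)) (hn : ‖n‖ = 1) (hq : ⟪q, n⟫ = 0)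
    (γ₂ φ₂ ηperp ηpar : ℝ) (hφ : φ₂ ≠ 0) (w : ℝ) (hw : w ≤ 0)
    (T₁ T₂ T : Matrix (Fin 3) (Fin 3) ℝ)
    (hbal : Matrix.toEuclideanLin (T₁ + T₂ - T) n = (γ₂ * |w| * w * (1 - 1 / φ₂)) • n)
    (hperm : ηperp * w =
      (⟪Matrix.toEuclideanLin T n, n⟫ - (1 / 2) * γ₂ * w ^ 2)
        - (⟪Matrix.toEuclideanLin ((1 / φ₂) • T₂) n, n⟫ - (1 / 2) * γ₂ * (w / φ₂) ^ 2))
    (hslip : Matrix.toEuclideanLin T₁ n - ⟪Matrix.toEuclideanLin T₁ n, n⟫ • n = ηpar • q) :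
    let v₂ := v₁ + (w / φ₂) • n + q
    let vf := v₁ + w • n + q
    ⟪Matrix.toEuclideanLin T₁ n, v₁⟫ + ⟪Matrix.toEuclideanLin T₂ n, v₂⟫
        - ⟪Matrix.toEuclideanLin T n, vf⟫
        + (1 / 2) * γ₂ * φ₂ * ‖v₂‖ ^ 2 * ⟪v₁ - v₂, n⟫
        - (1 / 2) * γ₂ * ‖vf‖ ^ 2 * ⟪v₁ - vf, n⟫
      = -ηperp * w ^ 2 - ηpar * ‖q‖ ^ 2 := by
  have habs : |w| = -w := abs_of_nonpos hw
  set A := Matrix.toEuclideanLin T₁ n with hA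
  set B := Matrix.toEuclideanLin T₂ n with hB
  set C := Matrix.toEuclideanLin T n with hC
  have hbal' : A + B - C = (γ₂ * |w| * w * (1 - 1 / φ₂)) • n := by
    rw [hA, hB, hC, ← LinearMap.add_apply, ← LinearMap.sub_apply, ← map_add, ← map_sub]
    exact hbal
  have hperm' : ηperp * w =
      (⟪C, n⟫ - 1/2 * γ₂ * w ^ 2) - ((1/φ₂) * ⟪B, n⟫ - 1/2 * γ₂ * (w/φ₂) ^ 2) := by
    rw [hB, hC]
    have hs : Matrix.toEuclideanLin ((1 / φ₂) • T₂) n = (1 / φ₂) • Matrix.toEuclideanLin T₂ n := by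
      rw [map_smul]; rfl
    rw [hperm, hs, real_inner_smul_left]
  have hnn : ⟪n, n⟫ = (1 : ℝ) := by
    rw [real_inner_self_eq_norm_sq, hn, one_pow]
  have hnq : ⟪n, q⟫ = (0 : ℝ) := by rw [real_inner_comm]; exact hq
  have h1 : ⟪A, v₁⟫ + ⟪B, v₁⟫ - ⟪C, v₁⟫ = γ₂ * (-w) * w * (1 - 1/φ₂) * ⟪n, v₁⟫ := by
    have := congrArg (fun x : EuclideanSpace ℝ (Fin 3) => (⟪x, v₁⟫ : ℝ)) hbal'
    simp only [inner_add_left, inner_sub_left, real_inner_smul_left, habs] at this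
    linarith [this]
  have h3 : ⟪A, q⟫ + ⟪B, q⟫ - ⟪C, q⟫ = 0 := by
    have := congrArg (fun x : EuclideanSpace ℝ (Fin 3) => (⟪x, q⟫ : ℝ)) hbal'
    simp only [inner_add_left, inner_sub_left, real_inner_smul_left, hnq, mul_zero] at this
    linarith [this]
  have h4 : ⟪A, q⟫ = ηpar * ‖q‖ ^ 2 := by
    have := congrArg (fun x : EuclideanSpace ℝ (Fin 3) => (⟪x, q⟫ : ℝ)) hslip
    simp only [← hA, inner_sub_left, real_inner_smul_left, hnq, mul_zero, sub_zero,
      real_inner_self_eq_norm_sq] at this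
    exact this
  intro v₂ vf
  have hv2 : ‖v₂‖ ^ 2 = ‖v₁‖^2 + (w/φ₂)^2 + ‖q‖^2 + 2*(w/φ₂)*⟪n, v₁⟫ + 2*⟪q, v₁⟫ := by
    rw [← real_inner_self_eq_norm_sq, ← real_inner_self_eq_norm_sq, ← real_inner_self_eq_norm_sq]
    show ⟪v₁ + (w / φ₂) • n + q, v₁ + (w / φ₂) • n + q⟫ = _
    simp only [inner_add_left, inner_add_right, real_inner_smul_left, real_inner_smul_right,
      hnn, hnq, hq, mul_zero, mul_one, add_zero, real_inner_comm v₁ n, real_inner_comm v₁ q]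
    ring
  have hvf : ‖vf‖ ^ 2 = ‖v₁‖^2 + w^2 + ‖q‖^2 + 2*w*⟪n, v₁⟫ + 2*⟪q, v₁⟫ := by
    rw [← real_inner_self_eq_norm_sq, ← real_inner_self_eq_norm_sq, ← real_inner_self_eq_norm_sq]
    show ⟪v₁ + w • n + q, v₁ + w • n + q⟫ = _
    simp only [inner_add_left, inner_add_right, real_inner_smul_left, real_inner_smul_right,
      hnn, hnq, hq, mul_zero, mul_one, add_zero, real_inner_comm v₁ n, real_inner_comm v₁ q]
    ring
  have hd2 : ⟪v₁ - v₂, n⟫ = -(w/φ₂) := by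
    show ⟪v₁ - (v₁ + (w / φ₂) • n + q), n⟫ = _
    simp only [inner_sub_left, inner_add_left, real_inner_smul_left, hnn, hq, mul_one, add_zero]
    ring
  have hdf : ⟪v₁ - vf, n⟫ = -w := by
    show ⟪v₁ - (v₁ + w • n + q), n⟫ = _
    simp only [inner_sub_left, inner_add_left, real_inner_smul_left, hnn, hq, mul_one, add_zero]
    ring
  have hBv2 : ⟪B, v₂⟫ = ⟪B, v₁⟫ + (w/φ₂) * ⟪B, n⟫ + ⟪B, q⟫ := by
    show ⟪B, v₁ + (w / φ₂) • n + q⟫ = _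
    simp only [inner_add_right, real_inner_smul_right]
  have hCvf : ⟪C, vf⟫ = ⟪C, v₁⟫ + w * ⟪C, n⟫ + ⟪C, q⟫ := by
    show ⟪C, v₁ + w • n + q⟫ = _
    simp only [inner_add_right, real_inner_smul_right]
  rw [hBv2, hCvf, hv2, hvf, hd2, hdf]
  have := gel_key φ₂ hφ γ₂ ηperp ηpar w (⟪A, v₁⟫) (⟪B, v₁⟫) (⟪C, v₁⟫) (⟪B, n⟫) (⟪C, n⟫)
    (⟪A, q⟫) (⟪B, q⟫) (⟪C, q⟫) (⟪n, v₁⟫) (⟪q, v₁⟫) (‖v₁‖^2) (‖q‖^2) h1 h3 h4 hperm'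
  linarith [this]
end

section
/- Let T ≤ T' be real numbers, let a ≥ 0 and K ≥ 0 be constants with K·a·(T' − T) < 1, and let y : [T, T'] → ℝ be a continuous nonnegative function satisfying y(t) ≤ a + K·∫_T^t y(τ)² dτ for all t ∈ [T, T']. Then for all t ∈ [T, T']: y(t) ≤ a / (1 − K·a·(t − T)). -/
open MeasureTheory Set Filter

/-- Strict version of the Riccati Gronwall estimate for positive initial data. -/
private lemma gel_key_s14 (T T' b K : ℝ) (hTT' : T ≤ T') (hb : 0 < b) (hK : 0 ≤ K)
    (hsmall : K * b * (T' - T) < 1)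
    (y : ℝ → ℝ) (hcont : ContinuousOn y (Set.Icc T T'))
    (hnonneg : ∀ t ∈ Set.Icc T T', 0 ≤ y t)
    (hineq : ∀ t ∈ Set.Icc T T', y t < b + K * ∫ τ in T..t, (y τ) ^ 2) :
    ∀ t ∈ Set.Icc T T', y t < b / (1 - K * b * (t - T)) := by
  set Y : ℝ → ℝ := fun t => b / (1 - K * b * (t - T)) with hY
  have hden : ∀ t ∈ Set.Icc T T', 0 < 1 - K * b * (t - T) := by
    intro t ht
    have h1 : K * b * (t - T) ≤ K * b * (T' - T) :=
      mul_le_mul_of_nonneg_left (by linarith [ht.2]) (mul_nonneg hK hb.le)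
    linarith
  by_contra hcon
  push_neg at hcon
  obtain ⟨t₁, ht₁, hy₁⟩ := hcon
  set S := {t ∈ Set.Icc T T' | Y t ≤ y t} with hS
  have hSne : S.Nonempty := ⟨t₁, ht₁, hy₁⟩
  have hbdd : BddBelow S := ⟨T, fun t ht => ht.1.1⟩
  have hYcont : ContinuousOn Y (Set.Icc T T') := by
    apply ContinuousOn.div continuousOn_const (by fun_prop)
    intro t ht; exact (hden t ht).ne'
  have hSclosed : IsClosed S := by
    have hSeq : S = Set.Icc T T' ∩ (fun t => y t - Y t) ⁻¹' Set.Ici 0 := by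
      ext t
      simp only [hS, Set.mem_setOf_eq, Set.mem_inter_iff, Set.mem_preimage,
        Set.mem_Ici, sub_nonneg]
    rw [hSeq]
    exact (hcont.sub hYcont).preimage_isClosed_of_isClosed isClosed_Icc isClosed_Ici
  have ht₀S : sInf S ∈ S := hSclosed.csInf_mem hSne hbdd
  set t₀ := sInf S with ht₀def
  have ht₀ : t₀ ∈ Set.Icc T T' := ht₀S.1
  have hyT : y T < b := by
    have := hineq T (Set.left_mem_Icc.mpr hTT')
    simpa using this
  have hTnot : T ∉ S := by
    intro h
    have hYT : Y T = b := by simp [hY]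
    have := h.2
    rw [hYT] at this
    linarith
  have hTt₀ : T < t₀ := lt_of_le_of_ne ht₀.1 (fun h => hTnot (h ▸ ht₀S))
  have hlt : ∀ τ ∈ Set.Ioo T t₀, y τ ^ 2 ≤ Y τ ^ 2 := by
    intro τ hτ
    have hτIcc : τ ∈ Set.Icc T T' := ⟨hτ.1.le, hτ.2.le.trans ht₀.2⟩
    have hτnot : τ ∉ S := fun h => absurd (csInf_le hbdd h) (not_le.mpr hτ.2)
    have hyY : y τ < Y τ := by
      by_contra h
      exact hτnot ⟨hτIcc, not_lt.1 h⟩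
    have h0 := hnonneg τ hτIcc
    nlinarith
  -- integrability
  have hsub : Set.Icc T t₀ ⊆ Set.Icc T T' := Set.Icc_subset_Icc le_rfl ht₀.2
  have hy2int : IntegrableOn (fun τ => y τ ^ 2) (Set.Icc T t₀) :=
    ((hcont.mono hsub).pow 2).integrableOn_Icc
  have hY2int : IntegrableOn (fun τ => Y τ ^ 2) (Set.Icc T t₀) :=
    ((hYcont.mono hsub).pow 2).integrableOn_Icc
  -- monotonicity of integrals
  have hmono : (∫ τ in T..t₀, y τ ^ 2) ≤ ∫ τ in T..t₀, Y τ ^ 2 := by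
    rw [intervalIntegral.integral_of_le ht₀.1, intervalIntegral.integral_of_le ht₀.1,
      MeasureTheory.integral_Ioc_eq_integral_Ioo, MeasureTheory.integral_Ioc_eq_integral_Ioo]
    exact setIntegral_mono_on (hy2int.mono_set Set.Ioo_subset_Icc_self)
      (hY2int.mono_set Set.Ioo_subset_Icc_self) measurableSet_Ioo hlt
  -- FTC for Y
  have hderiv : ∀ t ∈ Set.uIcc T t₀, HasDerivAt Y (K * Y t ^ 2) t := by
    intro t ht
    rw [Set.uIcc_of_le ht₀.1] at ht
    have htI : t ∈ Set.Icc T T' := hsub ht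
    have hd := hden t htI
    have hu : HasDerivAt (fun s => 1 - K * b * (s - T)) (-(K * b)) t := by
      simpa using (((hasDerivAt_id t).sub_const T).const_mul (K * b)).const_sub 1
    have h2 := (hu.inv hd.ne').const_mul b
    have h3 : HasDerivAt Y (b * (-(-(K * b)) / (1 - K * b * (t - T)) ^ 2)) t := by
      simpa [hY, div_eq_mul_inv] using h2
    convert h3 using 1
    have : Y t = b / (1 - K * b * (t - T)) := rfl
    rw [this]
    field_simp
  have hKY2int : IntervalIntegrable (fun t => K * Y t ^ 2) volume T t₀ := by
    apply ContinuousOn.intervalIntegrable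
    rw [Set.uIcc_of_le ht₀.1]
    exact continuousOn_const.mul ((hYcont.mono hsub).pow 2)
  have hFTC : (∫ τ in T..t₀, K * Y τ ^ 2) = Y t₀ - Y T :=
    intervalIntegral.integral_eq_sub_of_hasDerivAt hderiv hKY2int
  have hYT : Y T = b := by simp [hY]
  have hKmul : (∫ τ in T..t₀, K * Y τ ^ 2) = K * ∫ τ in T..t₀, Y τ ^ 2 :=
    intervalIntegral.integral_const_mul _ _
  have hfinal : y t₀ < Y t₀ := by
    have h1 := hineq t₀ ht₀
    have h2 : K * (∫ τ in T..t₀, y τ ^ 2) ≤ K * ∫ τ in T..t₀, Y τ ^ 2 :=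
      mul_le_mul_of_nonneg_left hmono hK
    rw [← hKmul, hFTC, hYT] at h2
    linarith
  exact absurd ht₀S.2 (not_le.mpr hfinal)

/-- Riccati-type nonlinear Gronwall estimate: if y(t) ≤ a + K∫_T^t y(τ)² dτ on
[T,T'] with K·a·(T'−T) < 1, then y(t) ≤ a/(1 − K·a·(t−T)). -/
theorem gel_riccati_gronwall (T T' a K : ℝ) (hTT' : T ≤ T')
    (ha : 0 ≤ a) (hK : 0 ≤ K) (hsmall : K * a * (T' - T) < 1)
    (y : ℝ → ℝ) (hcont : ContinuousOn y (Set.Icc T T'))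
    (hnonneg : ∀ t ∈ Set.Icc T T', 0 ≤ y t)
    (hineq : ∀ t ∈ Set.Icc T T', y t ≤ a + K * ∫ τ in T..t, (y τ) ^ 2) :
    ∀ t ∈ Set.Icc T T', y t ≤ a / (1 - K * a * (t - T)) := by
  intro t ht
  have hdent : 0 < 1 - K * a * (t - T) := by
    have h1 : K * a * (t - T) ≤ K * a * (T' - T) :=
      mul_le_mul_of_nonneg_left (by linarith [ht.2]) (mul_nonneg hK ha)
    linarith
  have hcontf : ContinuousAt (fun ε : ℝ => K * (a + ε) * (T' - T)) 0 := by fun_prop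
  have h1 : ∀ᶠ ε in nhdsWithin (0:ℝ) (Set.Ioi 0), K * (a + ε) * (T' - T) < 1 := by
    have : Tendsto (fun ε : ℝ => K * (a + ε) * (T' - T)) (nhds 0)
        (nhds (K * a * (T' - T))) := by
      simpa using hcontf.tendsto
    exact (this.eventually (eventually_lt_nhds hsmall)).filter_mono nhdsWithin_le_nhds
  have hev : ∀ᶠ ε in nhdsWithin (0:ℝ) (Set.Ioi 0),
      y t ≤ (a + ε) / (1 - K * (a + ε) * (t - T)) := by
    filter_upwards [h1, self_mem_nhdsWithin] with ε hε hεpos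
    have hεpos' : (0:ℝ) < ε := hεpos
    have := gel_key_s14 T T' (a + ε) K hTT' (by linarith) hK hε y hcont hnonneg
      (fun s hs => by linarith [hineq s hs]) t ht
    exact this.le
  have htend : Tendsto (fun ε : ℝ => (a + ε) / (1 - K * (a + ε) * (t - T)))
      (nhdsWithin (0:ℝ) (Set.Ioi 0)) (nhds (a / (1 - K * a * (t - T)))) := by
    have hca : ContinuousAt (fun ε : ℝ => (a + ε) / (1 - K * (a + ε) * (t - T))) 0 := by
      apply ContinuousAt.div (by fun_prop) (by fun_prop)
      simpa using hdent.ne'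
    have := hca.tendsto
    simp only [add_zero] at this
    exact this.mono_left nhdsWithin_le_nhds
  exact ge_of_tendsto htend hev
end

section
/- Let T ≤ T' be real numbers, let a ≥ 0 and C ≥ 0 be constants with 2·C·a·(T' − T) < 1, and let U₁, U₂ : [T, T'] → ℝ be continuous nonnegative functions satisfying, for i = 1, 2 and all t ∈ [T, T']: U_i(t) ≤ a + C·∫_T^t ( U₁(τ)² + U₂(τ)² ) dτ. Then for i = 1, 2 and all t ∈ [T, T']: U_i(t) ≤ a / (1 − 2·C·a·(t − T)). -/
open Set intervalIntegral MeasureTheory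

/-- Key Riccati estimate for the primitive: if `g ≥ 0` is continuous on `[T,T']` and
`g t ≤ 2 (a + C ∫_T^t g)²`, then `a + C ∫_T^t g ≤ a / (1 - 2Ca(t-T))`. -/
lemma gel_key_s15 (T T' a C : ℝ) (hTT' : T ≤ T') (ha : 0 < a) (hC : 0 ≤ C)
    (hsmall : 2 * C * a * (T' - T) < 1) (g : ℝ → ℝ)
    (hg : ContinuousOn g (Set.Icc T T'))
    (hgnn : ∀ t ∈ Set.Icc T T', 0 ≤ g t)
    (hbound : ∀ t ∈ Set.Icc T T', g t ≤ 2 * (a + C * ∫ τ in T..t, g τ) ^ 2) :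
    ∀ t ∈ Set.Icc T T', a + C * (∫ τ in T..t, g τ) ≤ a / (1 - 2 * C * a * (t - T)) := by
  set W : ℝ → ℝ := fun t => ∫ τ in T..t, g τ with hW
  set G : ℝ → ℝ := fun t => a + C * W t with hG
  have hIntOn : IntegrableOn g (Set.Icc T T') := hg.integrableOn_Icc
  have hWcont : ContinuousOn W (Set.Icc T T') := by
    have := continuousOn_primitive_interval (a := T) (b := T') (f := g) (μ := volume)
      (by rwa [Set.uIcc_of_le hTT'])
    rwa [Set.uIcc_of_le hTT'] at this
  have hWnn : ∀ t ∈ Set.Icc T T', 0 ≤ W t := by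
    intro t ht
    apply intervalIntegral.integral_nonneg ht.1
    intro u hu
    exact hgnn u ⟨hu.1, hu.2.trans ht.2⟩
  have hGpos : ∀ t ∈ Set.Icc T T', 0 < G t := by
    intro t ht
    have := hWnn t ht
    have : 0 ≤ C * W t := mul_nonneg hC this
    simp only [hG]; linarith
  have hGcont : ContinuousOn G (Set.Icc T T') :=
    continuousOn_const.add (continuousOn_const.mul hWcont)
  -- derivative of W at interior points
  have hWderiv : ∀ x ∈ Set.Ioo T T', HasDerivAt W (g x) x := by
    intro x hx
    have hxI : x ∈ Set.Icc T T' := Set.Ioo_subset_Icc_self hx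
    have hnhds : Set.Icc T T' ∈ nhds x := Icc_mem_nhds hx.1 hx.2
    have hInt : IntervalIntegrable g volume T x := by
      apply (hIntOn.mono_set _).intervalIntegrable
      rw [Set.uIcc_of_le hxI.1]
      exact Set.Icc_subset_Icc le_rfl hxI.2
    have hmeas : StronglyMeasurableAtFilter g (nhds x) volume :=
      ⟨Set.Icc T T', hnhds, hg.aestronglyMeasurable measurableSet_Icc⟩
    exact intervalIntegral.integral_hasDerivAt_right hInt hmeas
      (hg.continuousAt hnhds)
  -- the function P = 1/G + 2C·t is monotone on [T,T']
  set P : ℝ → ℝ := fun t => (G t)⁻¹ + 2 * C * t with hP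
  have hPcont : ContinuousOn P (Set.Icc T T') :=
    (hGcont.inv₀ fun t ht => (hGpos t ht).ne').add
      ((continuousOn_const).mul continuousOn_id)
  have hPmono : MonotoneOn P (Set.Icc T T') := by
    apply monotoneOn_of_hasDerivWithinAt_nonneg (convex_Icc T T') hPcont
      (f' := fun x => -(C * g x) / G x ^ 2 + 2 * C)
    · intro x hx
      rw [interior_Icc] at hx ⊢
      have hxI : x ∈ Set.Icc T T' := Set.Ioo_subset_Icc_self hx
      have hGd : HasDerivAt G (C * g x) x := by
        have := (hasDerivAt_const x a).add ((hWderiv x hx).const_mul C)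
        simp only [zero_add] at this
        exact this
      have hHd : HasDerivAt (fun t => (G t)⁻¹) (-(C * g x) / G x ^ 2) x :=
        hGd.inv (hGpos x hxI).ne'
      have h2 : HasDerivAt (fun t => 2 * C * t) (2 * C) x := by
        simpa using (hasDerivAt_id x).const_mul (2 * C)
      exact (hHd.add h2).hasDerivWithinAt
    · intro x hx
      rw [interior_Icc] at hx
      have hxI : x ∈ Set.Icc T T' := Set.Ioo_subset_Icc_self hx
      have hGx := hGpos x hxI
      have hb := hbound x hxI
      have hdiv : C * g x / G x ^ 2 ≤ 2 * C := by
        rw [div_le_iff₀ (by positivity)]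
        calc C * g x ≤ C * (2 * (G x) ^ 2) :=
              mul_le_mul_of_nonneg_left hb hC
          _ = 2 * C * G x ^ 2 := by ring
      have : -(C * g x) / G x ^ 2 = -(C * g x / G x ^ 2) := by ring
      rw [this]
      linarith
  -- conclude
  intro t ht
  have hPT : P T ≤ P t := hPmono (Set.left_mem_Icc.mpr hTT') ht ht.1
  have hWT : W T = 0 := intervalIntegral.integral_same
  have hGT : G T = a := by simp [hG, hWT]
  have hGt := hGpos t ht
  set D : ℝ := 1 - 2 * C * a * (t - T) with hD
  have hDpos : 0 < D := by
    have h1 : 2 * C * a * (t - T) ≤ 2 * C * a * (T' - T) := by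
      apply mul_le_mul_of_nonneg_left (by linarith [ht.2]) (by positivity)
    linarith
  have hle : D / a ≤ (G t)⁻¹ := by
    have : (G T)⁻¹ + 2 * C * T ≤ (G t)⁻¹ + 2 * C * t := hPT
    rw [hGT] at this
    have hDa : D / a = a⁻¹ - 2 * C * (t - T) := by
      field_simp [hD]; ring
    rw [hDa]
    linarith
  rw [← one_div] at hle
  have hDG : D * G t ≤ 1 * a := (div_le_div_iff₀ ha hGt).mp hle
  rw [le_div_iff₀ hDpos]
  show G t * D ≤ a
  nlinarith [hDG]

/-- Two-component Riccati-type Gronwall estimate: if U₁, U₂ satisfy the coupled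
quadratic integral inequality Uᵢ(t) ≤ a + C∫_T^t (U₁² + U₂²) dτ on [T,T'] with
2·C·a·(T'−T) < 1, then Uᵢ(t) ≤ a/(1 − 2·C·a·(t−T)). -/
theorem gel_riccati_gronwall_two_component (T T' a C : ℝ) (hTT' : T ≤ T')
    (ha : 0 ≤ a) (hC : 0 ≤ C) (hsmall : 2 * C * a * (T' - T) < 1)
    (U₁ U₂ : ℝ → ℝ)
    (hcont₁ : ContinuousOn U₁ (Set.Icc T T')) (hcont₂ : ContinuousOn U₂ (Set.Icc T T'))
    (hnonneg₁ : ∀ t ∈ Set.Icc T T', 0 ≤ U₁ t) (hnonneg₂ : ∀ t ∈ Set.Icc T T', 0 ≤ U₂ t)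
    (hineq₁ : ∀ t ∈ Set.Icc T T',
      U₁ t ≤ a + C * ∫ τ in T..t, ((U₁ τ) ^ 2 + (U₂ τ) ^ 2))
    (hineq₂ : ∀ t ∈ Set.Icc T T',
      U₂ t ≤ a + C * ∫ τ in T..t, ((U₁ τ) ^ 2 + (U₂ τ) ^ 2)) :
    (∀ t ∈ Set.Icc T T', U₁ t ≤ a / (1 - 2 * C * a * (t - T))) ∧
      (∀ t ∈ Set.Icc T T', U₂ t ≤ a / (1 - 2 * C * a * (t - T))) := by
  set g : ℝ → ℝ := fun τ => (U₁ τ) ^ 2 + (U₂ τ) ^ 2 with hg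
  have hgcont : ContinuousOn g (Set.Icc T T') :=
    (hcont₁.pow 2).add (hcont₂.pow 2)
  have hgnn : ∀ t ∈ Set.Icc T T', 0 ≤ g t := fun t _ => by positivity
  -- for any b with 0 < b, a ≤ b, 2Cb(T'-T)<1 we get the bound with b
  have main : ∀ b : ℝ, 0 < b → a ≤ b → 2 * C * b * (T' - T) < 1 →
      ∀ t ∈ Set.Icc T T',
        b + C * (∫ τ in T..t, g τ) ≤ b / (1 - 2 * C * b * (t - T)) := by
    intro b hb hab hsm
    apply gel_key_s15 T T' b C hTT' hb hC hsm g hgcont hgnn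
    intro t ht
    have h1 : U₁ t ≤ b + C * ∫ τ in T..t, g τ := (hineq₁ t ht).trans (by linarith)
    have h2 : U₂ t ≤ b + C * ∫ τ in T..t, g τ := (hineq₂ t ht).trans (by linarith)
    have hn1 := hnonneg₁ t ht
    have hn2 := hnonneg₂ t ht
    have e1 : U₁ t ^ 2 ≤ (b + C * ∫ τ in T..t, g τ) ^ 2 := pow_le_pow_left₀ hn1 h1 2
    have e2 : U₂ t ^ 2 ≤ (b + C * ∫ τ in T..t, g τ) ^ 2 := pow_le_pow_left₀ hn2 h2 2
    show U₁ t ^ 2 + U₂ t ^ 2 ≤ 2 * (b + C * ∫ τ in T..t, g τ) ^ 2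
    linarith
  rcases eq_or_lt_of_le ha with rfl | hapos
  · -- a = 0 : show U_i t ≤ 0
    have hzero : ∀ t ∈ Set.Icc T T', C * (∫ τ in T..t, g τ) ≤ 0 := by
      intro t ht
      by_contra hcon
      push_neg at hcon
      set I := C * (∫ τ in T..t, g τ) with hI
      -- choose ε small
      set ε : ℝ := min (I / 4) (1 / (4 * (C * (T' - T)) + 4)) with hε
      have hCT : 0 ≤ C * (T' - T) := mul_nonneg hC (by linarith)
      have hεpos : 0 < ε := lt_min (by linarith) (by positivity)
      have hεsmall : 2 * C * ε * (T' - T) ≤ 1 / 2 := by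
        have h1 : ε ≤ 1 / (4 * (C * (T' - T)) + 4) := min_le_right _ _
        have h2 : 2 * C * ε * (T' - T) = 2 * (C * (T' - T)) * ε := by ring
        rw [h2]
        calc 2 * (C * (T' - T)) * ε ≤ 2 * (C * (T' - T)) * (1 / (4 * (C * (T' - T)) + 4)) :=
              mul_le_mul_of_nonneg_left h1 (by positivity)
          _ ≤ 1 / 2 := by
              rw [mul_one_div, div_le_div_iff₀ (by positivity) (by norm_num)]
              linarith
      have := main ε hεpos (by linarith) (by linarith) t ht
      have hdenpos : 1 / 2 ≤ 1 - 2 * C * ε * (t - T) := by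
        have h1 : 2 * C * ε * (t - T) ≤ 2 * C * ε * (T' - T) :=
          mul_le_mul_of_nonneg_left (by linarith [ht.2]) (by positivity)
        linarith
      have hεD : ε / (1 - 2 * C * ε * (t - T)) ≤ 2 * ε := by
        rw [div_le_iff₀ (by linarith)]
        nlinarith
      have hI4 : ε ≤ I / 4 := min_le_left _ _
      -- I ≤ ε + I ≤ ε/D ≤ 2ε ≤ I/2, contradiction
      have : I ≤ ε := by linarith
      linarith
    refine ⟨fun t ht => ?_, fun t ht => ?_⟩ <;>
      · have h := hzero t ht
        simp only [mul_zero, zero_mul, sub_zero, zero_div]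
        first
        | linarith [hineq₁ t ht]
        | linarith [hineq₂ t ht]
  · -- a > 0
    have hres := main a hapos le_rfl hsmall
    refine ⟨fun t ht => ?_, fun t ht => ?_⟩
    · exact (hineq₁ t ht).trans (hres t ht)
    · exact (hineq₂ t ht).trans (hres t ht)
end
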